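/- For every positive integer m, ∫_{0}^{π} u·(sin(mu/2)/sin(u/2))^4 du ≤ (π⁴·ln 2 / 4)·m². -/

import Mathlib

open MeasureTheory

lemma abs_sin_nat_mul_le' (n : ℕ) (x : ℝ) : |Real.sin (n * x)| ≤ n * |Real.sin x| := by
  induction n with
  | zero => simp
  | succ n ih =>
    have h : Real.sin ((n + 1 : ℕ) * x)
        = Real.sin (n * x) * Real.cos x + Real.cos (n * x) * Real.sin x := by
      push_cast
      rw [show ((n : ℝ) + 1) * x = n * x + x by ring, Real.sin_add]
    rw [h]
    calc |Real.sin (n * x) * Real.cos x + Real.cos (n * x) * Real.sin x|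
        ≤ |Real.sin (n * x) * Real.cos x| + |Real.cos (n * x) * Real.sin x| := abs_add_le _ _
      _ ≤ |Real.sin (n * x)| * 1 + 1 * |Real.sin x| := by
          rw [abs_mul, abs_mul]
          gcongr
          · exact Real.abs_cos_le_one x
          · exact Real.abs_cos_le_one _
      _ ≤ (n : ℝ) * |Real.sin x| + 1 * |Real.sin x| := by
          rw [mul_one]; gcongr
      _ = ((n : ℕ) + 1 : ℕ) * |Real.sin x| := by push_cast; ring

lemma ratio_pow_le (m : ℕ) (u : ℝ) :
    (Real.sin (m * u / 2) / Real.sin (u / 2)) ^ 4 ≤ (m : ℝ) ^ 4 := by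
  rcases eq_or_ne (Real.sin (u / 2)) 0 with hs | hs
  · simp [hs]
  · have h1 : |Real.sin (m * u / 2)| ≤ m * |Real.sin (u / 2)| := by
      have := abs_sin_nat_mul_le' m (u / 2)
      rwa [show (m : ℝ) * (u / 2) = m * u / 2 by ring] at this
    have h2 : |Real.sin (m * u / 2) / Real.sin (u / 2)| ≤ (m : ℝ) := by
      rw [abs_div, div_le_iff₀ (abs_pos.mpr hs)]
      exact h1
    calc (Real.sin (m * u / 2) / Real.sin (u / 2)) ^ 4
        ≤ |(Real.sin (m * u / 2) / Real.sin (u / 2)) ^ 4| := le_abs_self _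
      _ = |Real.sin (m * u / 2) / Real.sin (u / 2)| ^ 4 := abs_pow _ 4
      _ ≤ (m : ℝ) ^ 4 := pow_le_pow_left₀ (abs_nonneg _) h2 4

/-- **First-moment bound for the Jackson kernel:**
`∫_0^π u·(sin(mu/2)/sin(u/2))^4 du ≤ (π⁴·ln 2/4)·m²`. -/
theorem integral_mul_jacksonKernel_le (m : ℕ) (hm : 0 < m) :
    ∫ u in (0 : ℝ)..Real.pi, u * (Real.sin (m * u / 2) / Real.sin (u / 2)) ^ 4
      ≤ (Real.pi ^ 4 * Real.log 2 / 4) * (m : ℝ) ^ 2 := by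
  have pi_pos := Real.pi_pos
  have hm1 : (1 : ℝ) ≤ m := by exact_mod_cast hm
  set f : ℝ → ℝ := fun u => u * (Real.sin (m * u / 2) / Real.sin (u / 2)) ^ 4 with hf
  have hc : (0 : ℝ) < Real.pi / m := by positivity
  have hcπ : Real.pi / m ≤ Real.pi := by
    rw [div_le_iff₀ (by positivity)]
    nlinarith
  -- integrability of f on [0, π]
  have hmeas : Measurable f := by
    apply Measurable.mul measurable_id
    apply Measurable.pow _ measurable_const
    exact (Real.measurable_sin.comp ((measurable_const.mul measurable_id).div_const 2)).div
      (Real.measurable_sin.comp (measurable_id.div_const 2))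
  have hfint : IntervalIntegrable f volume 0 Real.pi := by
    apply IntervalIntegrable.mono_fun' (g := fun _ => Real.pi * (m : ℝ) ^ 4)
      (intervalIntegrable_const) hmeas.aestronglyMeasurable.restrict
    rw [Filter.EventuallyLE, ae_restrict_iff' measurableSet_uIoc]
    refine Filter.Eventually.of_forall fun u hu => ?_
    rw [Set.uIoc_of_le pi_pos.le] at hu
    have hu0 : 0 < u := hu.1
    have huπ : u ≤ Real.pi := hu.2
    have h1 := ratio_pow_le m u
    have h0 : 0 ≤ (Real.sin (m * u / 2) / Real.sin (u / 2)) ^ 4 := by positivity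
    simp only [Real.norm_eq_abs, hf]
    rw [abs_of_nonneg (by positivity)]
    nlinarith
  have hsub1 : Set.uIcc (0 : ℝ) (Real.pi / m) ⊆ Set.uIcc (0 : ℝ) Real.pi := by
    rw [Set.uIcc_of_le hc.le, Set.uIcc_of_le pi_pos.le]
    exact Set.Icc_subset_Icc le_rfl hcπ
  have hsub2 : Set.uIcc (Real.pi / m) Real.pi ⊆ Set.uIcc (0 : ℝ) Real.pi := by
    rw [Set.uIcc_of_le hcπ, Set.uIcc_of_le pi_pos.le]
    exact Set.Icc_subset_Icc hc.le le_rfl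
  have hfint1 : IntervalIntegrable f volume 0 (Real.pi / m) := hfint.mono_set hsub1
  have hfint2 : IntervalIntegrable f volume (Real.pi / m) Real.pi := hfint.mono_set hsub2
  have hsplit : ∫ u in (0 : ℝ)..Real.pi, f u
      = (∫ u in (0 : ℝ)..(Real.pi / m), f u) + ∫ u in (Real.pi / m)..Real.pi, f u :=
    (intervalIntegral.integral_add_adjacent_intervals hfint1 hfint2).symm
  -- first piece
  have hpiece1 : (∫ u in (0 : ℝ)..(Real.pi / m), f u)
      ≤ ∫ u in (0 : ℝ)..(Real.pi / m), u * (m : ℝ) ^ 4 := by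
    apply intervalIntegral.integral_mono_on hc.le hfint1
    · exact (continuous_id.mul continuous_const).intervalIntegrable _ _
    · intro u hu
      have hu0 : 0 ≤ u := hu.1
      have := ratio_pow_le m u
      have h0 : 0 ≤ (Real.sin (m * u / 2) / Real.sin (u / 2)) ^ 4 := by positivity
      simp only [hf]
      nlinarith
  have hval1 : (∫ u in (0 : ℝ)..(Real.pi / m), u * (m : ℝ) ^ 4)
      = Real.pi ^ 2 * m ^ 2 / 2 := by
    rw [intervalIntegral.integral_mul_const, integral_id]
    have hmne : (m : ℝ) ≠ 0 := by positivity
    field_simp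
    ring
  -- second piece
  have hzero : (0 : ℝ) ∉ Set.uIcc (Real.pi / m) Real.pi := by
    rw [Set.uIcc_of_le hcπ]
    intro h0
    exact absurd h0.1 (by push_neg; exact hc)
  have hgint : IntervalIntegrable (fun u : ℝ => Real.pi ^ 4 * u ^ (-3 : ℤ)) volume
      (Real.pi / m) Real.pi := by
    apply ContinuousOn.intervalIntegrable
    apply ContinuousOn.mul continuousOn_const
    exact continuousOn_id.zpow₀ _ (fun x hx => Or.inl (fun h => hzero (h ▸ hx)))
  have hpiece2 : (∫ u in (Real.pi / m)..Real.pi, f u)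
      ≤ ∫ u in (Real.pi / m)..Real.pi, Real.pi ^ 4 * u ^ (-3 : ℤ) := by
    apply intervalIntegral.integral_mono_on hcπ hfint2 hgint
    intro u hu
    have hu0 : 0 < u := lt_of_lt_of_le hc hu.1
    have huπ : u ≤ Real.pi := hu.2
    have hs : u / Real.pi ≤ Real.sin (u / 2) := by
      have h := Real.mul_le_sin (x := u / 2) (by positivity) (by linarith)
      calc u / Real.pi = 2 / Real.pi * (u / 2) := by
            field_simp
        _ ≤ Real.sin (u / 2) := h
    have hspos : 0 < Real.sin (u / 2) := lt_of_lt_of_le (by positivity) hs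
    have hnum : Real.sin (m * u / 2) ^ 4 ≤ 1 := by
      have h1 : Real.sin (m * u / 2) ^ 2 ≤ 1 := Real.sin_sq_le_one _
      nlinarith [sq_nonneg (Real.sin (m * u / 2))]
    have hden : (u / Real.pi) ^ 4 ≤ Real.sin (u / 2) ^ 4 := by
      gcongr
    have hden' : (0 : ℝ) < (u / Real.pi) ^ 4 := by positivity
    simp only [hf, div_pow]
    calc u * (Real.sin (m * u / 2) ^ 4 / Real.sin (u / 2) ^ 4)
        ≤ u * (1 / (u / Real.pi) ^ 4) :=
          mul_le_mul_of_nonneg_left (div_le_div₀ zero_le_one hnum hden' hden) hu0.le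
      _ = Real.pi ^ 4 * u ^ (-3 : ℤ) := by
          rw [zpow_neg, show (3 : ℤ) = ((3 : ℕ) : ℤ) by norm_num, zpow_natCast]
          field_simp
  have hval2 : (∫ u in (Real.pi / m)..Real.pi, Real.pi ^ 4 * u ^ (-3 : ℤ))
      ≤ Real.pi ^ 2 * m ^ 2 / 2 := by
    have hmne : (m : ℝ) ≠ 0 := by positivity
    rw [intervalIntegral.integral_const_mul, integral_zpow (Or.inr ⟨by norm_num, hzero⟩)]
    norm_num
    have key : Real.pi ^ 4 * (((Real.pi ^ 2)⁻¹ - ((Real.pi / (m : ℝ)) ^ 2)⁻¹) / (-2))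
        = Real.pi ^ 2 * m ^ 2 / 2 - Real.pi ^ 2 / 2 := by
      field_simp
      ring
    rw [key]
    nlinarith [sq_nonneg Real.pi]
  -- combine
  have hlog : (0.6931471803 : ℝ) < Real.log 2 := Real.log_two_gt_d9
  have hpi3 : (3 : ℝ) < Real.pi := Real.pi_gt_three
  have h9 : (9 : ℝ) < Real.pi ^ 2 := by nlinarith
  have hlogpos : (0 : ℝ) < Real.log 2 := by linarith
  have hA : (4 : ℝ) ≤ Real.pi ^ 2 * Real.log 2 := by nlinarith
  have key : Real.pi ^ 2 ≤ Real.pi ^ 4 * Real.log 2 / 4 := by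
    nlinarith [mul_le_mul_of_nonneg_left hA (sq_nonneg Real.pi)]
  have hm2 : (0 : ℝ) ≤ (m : ℝ) ^ 2 := sq_nonneg _
  calc ∫ u in (0 : ℝ)..Real.pi, f u
      ≤ Real.pi ^ 2 * m ^ 2 / 2 + Real.pi ^ 2 * m ^ 2 / 2 := by
        rw [hsplit]
        have hA1 := hpiece1.trans_eq hval1
        have hB1 := hpiece2.trans hval2
        linarith
    _ = Real.pi ^ 2 * m ^ 2 := by ring
    _ ≤ (Real.pi ^ 4 * Real.log 2 / 4) * (m : ℝ) ^ 2 :=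
        mul_le_mul_of_nonneg_right key hm2
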